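/- Under the non-resonance condition (u − u₁)² ≠ c₁² and (u − u₂)² ≠ c₂², the explicit matrix R of candidate eigenvectors satisfies M·R = R·D, where D = diag(u, u₁+c₁, u₁−c₁, u₁, u₂+c₂, u₂−c₂, u₂); i.e., each column of R is an eigenvector of M for the corresponding eigenvalue. -/

import Mathlib

set_option maxHeartbeats 8000000


open Matrix

@[simp] lemma cons_val_five {α : Type*} {m : ℕ} (x : α) (u : Fin (m+5) → α) :
    Matrix.vecCons x u 5 =
      Matrix.vecHead (Matrix.vecTail (Matrix.vecTail (Matrix.vecTail (Matrix.vecTail u)))) := rfl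
@[simp] lemma cons_val_six {α : Type*} {m : ℕ} (x : α) (u : Fin (m+6) → α) :
    Matrix.vecCons x u 6 =
      Matrix.vecHead (Matrix.vecTail (Matrix.vecTail (Matrix.vecTail
        (Matrix.vecTail (Matrix.vecTail u))))) := rfl

/-- Under the non-resonance condition, the explicit matrix `R` of candidate
eigenvectors satisfies `M * R = R * D` with `D` diagonal, i.e. each column of `R`
is an eigenvector of `M` for the corresponding eigenvalue. -/
theorem eigenvector_matrix_relation
    (α₁ ρ₁ ρ₂ c₁ c₂ u₁ u₂ p₁ p₂ : ℝ)
    (hα₁ : 0 < α₁) (hα₁' : α₁ < 1)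
    (hρ₁ : 0 < ρ₁) (hρ₂ : 0 < ρ₂) (hc₁ : 0 < c₁) (hc₂ : 0 < c₂)
    (α₂ m₁ m₂ ρ Y₁ Y₂ u W Δ₁ Δ₂ : ℝ)
    (hα₂ : α₂ = 1 - α₁) (hm₁ : m₁ = α₁ * ρ₁) (hm₂ : m₂ = α₂ * ρ₂)
    (hρ : ρ = m₁ + m₂) (hY₁ : Y₁ = m₁ / ρ) (hY₂ : Y₂ = m₂ / ρ)
    (hu : u = Y₁ * u₁ + Y₂ * u₂) (hW : W = u₁ - u₂)
    (hΔ₁ : Δ₁ = (u₁ - u) ^ 2 - c₁ ^ 2) (hΔ₂ : Δ₂ = (u₂ - u) ^ 2 - c₂ ^ 2)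
    (hres₁ : (u - u₁) ^ 2 ≠ c₁ ^ 2) (hres₂ : (u - u₂) ^ 2 ≠ c₂ ^ 2)
    (M R D : Matrix (Fin 7) (Fin 7) ℝ)
    (hM : M = !![u, 0, 0, 0, 0, 0, 0;
                 (p₁ - p₂) / ρ, u₁, 1 / ρ₁, 0, 0, 0, 0;
                 -(ρ₁ * c₁ ^ 2 / α₁) * (u - u₁), ρ₁ * c₁ ^ 2, u₁, 0, 0, 0, 0;
                 0, 0, 0, u₁, 0, 0, 0;
                 (p₁ - p₂) / ρ, 0, 0, 0, u₂, 1 / ρ₂, 0;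
                 (ρ₂ * c₂ ^ 2 / α₂) * (u - u₂), 0, 0, 0, ρ₂ * c₂ ^ 2, u₂, 0;
                 0, 0, 0, 0, 0, 0, u₂])
    (hR : R = !![1, 0, 0, 0, 0, 0, 0;
                 (-Y₂ * W / Δ₁) * ((p₁ - p₂) / ρ - c₁ ^ 2 / α₁), 1, 1, 0, 0, 0, 0;
                 (ρ₁ * c₁ ^ 2 / Δ₁) * ((p₁ - p₂) / ρ - Y₂ ^ 2 * W ^ 2 / α₁),
                   ρ₁ * c₁, -(ρ₁ * c₁), 0, 0, 0, 0;
                 0, 0, 0, 1, 0, 0, 0;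
                 (Y₁ * W / Δ₂) * ((p₁ - p₂) / ρ + c₂ ^ 2 / α₂), 0, 0, 0, 1, 1, 0;
                 (ρ₂ * c₂ ^ 2 / Δ₂) * ((p₁ - p₂) / ρ + Y₁ ^ 2 * W ^ 2 / α₂),
                   0, 0, 0, ρ₂ * c₂, -(ρ₂ * c₂), 0;
                 0, 0, 0, 0, 0, 0, 1])
    (hD : D = Matrix.diagonal ![u, u₁ + c₁, u₁ - c₁, u₁, u₂ + c₂, u₂ - c₂, u₂]) :
    M * R = R * D := by
  -- basic positivity facts
  have hα₂pos : (0:ℝ) < α₂ := by rw [hα₂]; linarith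
  have hρpos : (0:ℝ) < ρ := by
    rw [hρ, hm₁, hm₂]
    have h1 := mul_pos hα₁ hρ₁
    have h2 := mul_pos hα₂pos hρ₂
    linarith
  have hρ0 : ρ ≠ 0 := ne_of_gt hρpos
  have hα₁0 : α₁ ≠ 0 := ne_of_gt hα₁
  have hα₂0 : α₂ ≠ 0 := ne_of_gt hα₂pos
  have hρ₁0 : ρ₁ ≠ 0 := ne_of_gt hρ₁
  have hρ₂0 : ρ₂ ≠ 0 := ne_of_gt hρ₂
  -- express Y₂ in terms of Y₁
  have hY₂' : Y₂ = 1 - Y₁ := by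
    rw [hY₂, hY₁]; field_simp; linarith [hρ]
  subst hY₂'
  subst hW
  subst hu
  -- rewrite Δ₁, Δ₂
  have hΔ₁' : Δ₁ = (1 - Y₁) ^ 2 * (u₁ - u₂) ^ 2 - c₁ ^ 2 := by
    rw [hΔ₁]; ring
  have hΔ₂' : Δ₂ = Y₁ ^ 2 * (u₁ - u₂) ^ 2 - c₂ ^ 2 := by
    rw [hΔ₂]; ring
  subst hΔ₁'
  subst hΔ₂'
  have hΔ₁0 : (1 - Y₁) ^ 2 * (u₁ - u₂) ^ 2 - c₁ ^ 2 ≠ 0 := by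
    have h := sub_ne_zero_of_ne hres₁
    intro hcon; apply h; linear_combination hcon
  have hΔ₂0 : Y₁ ^ 2 * (u₁ - u₂) ^ 2 - c₂ ^ 2 ≠ 0 := by
    have h := sub_ne_zero_of_ne hres₂
    intro hcon; apply h; linear_combination hcon
  have hΔ₁0' : (u₁ - u₂) ^ 2 * (1 - Y₁) ^ 2 - c₁ ^ 2 ≠ 0 := by rw [mul_comm]; exact hΔ₁0
  have hΔ₂0' : (u₁ - u₂) ^ 2 * Y₁ ^ 2 - c₂ ^ 2 ≠ 0 := by rw [mul_comm]; exact hΔ₂0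
  subst hM hR hD
  ext i j
  fin_cases i <;> fin_cases j <;>
    (simp [Matrix.mul_apply, Fin.sum_univ_seven, Matrix.vecHead, Matrix.vecTail,
      Matrix.diagonal]
     try field_simp
     try ring1)
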